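/- For every n ∈ ℕ and every d ≥ 3, there exists an injective map Φ : 𝒫_{n,d} → 𝒫_{n(n+1),d−1} satisfying Φ(𝒥^lin_{n,d}) = 𝒥^lin_{n(n+1),d−1;n} ∩ Φ(𝒫_{n,d}) and Φ(𝒥_{n,d}) = 𝒥_{n(n+1),d−1;n} ∩ Φ(𝒫_{n,d}). -/

import Mathlib

open MvPolynomial

/-- The Jacobian determinant of a polynomial system indexed by a finite type `ι`,
as a polynomial: `det (∂F_j/∂z_i)_{i,j}`. -/
noncomputable def jacDet {ι : Type*} [Fintype ι] [DecidableEq ι]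
    (F : ι → MvPolynomial ι ℂ) : MvPolynomial ι ℂ :=
  Matrix.det (Matrix.of fun i j => pderiv i (F j))

/-- `𝒫_{ι,d}`: polynomial systems `ℂ^ι → ℂ^ι` of total degree at most `d`. -/
def PolySys (ι : Type*) (d : ℕ) : Set (ι → MvPolynomial ι ℂ) :=
  {F | ∀ i, (F i).totalDegree ≤ d}

/-- `𝒥^lin`: systems in `𝒫` whose Jacobian determinant is a nonzero constant. -/
def JlinSet (ι : Type*) [Fintype ι] [DecidableEq ι] (d : ℕ) :
    Set (ι → MvPolynomial ι ℂ) :=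
  {F | F ∈ PolySys ι d ∧ ∃ c : ℂ, c ≠ 0 ∧ jacDet F = C c}

/-- `𝒥`: systems in `𝒫` invertible with polynomial inverse. -/
def JSet (ι : Type*) [Fintype ι] [DecidableEq ι] (d : ℕ) :
    Set (ι → MvPolynomial ι ℂ) :=
  {F | F ∈ PolySys ι d ∧ ∃ G : ι → MvPolynomial ι ℂ,
    (∀ i, bind₁ F (G i) = X i) ∧ (∀ i, bind₁ G (F i) = X i)}

/-- For a system `G` on variables split into blocks `α ⊕ β`, and a parameter
`z1 : ℂ^α`, the system `R(·; z1) := G₂(z1, ·)` in the variables `z2 : ℂ^β`. -/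
noncomputable def Rsys {α β : Type*}
    (G : (α ⊕ β) → MvPolynomial (α ⊕ β) ℂ) (z1 : α → ℂ) :
    β → MvPolynomial β ℂ :=
  fun j => aeval (Sum.elim (fun a => C (z1 a)) X) (G (Sum.inr j))

/-- `𝒥_{m,d;n'}` (with `ℂ^m = ℂ^α × ℂ^β`, first block `α`): systems `G ∈ 𝒫_{m,d}`
such that for every `u ∈ ℂ^α` there is a unique `z ∈ ℂ^m` with `G(z) = (u,0)`,
and the map `u ↦ z` is polynomial. -/
def JParamSet (α β : Type*) (d : ℕ) : Set ((α ⊕ β) → MvPolynomial (α ⊕ β) ℂ) :=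
  {G | G ∈ PolySys (α ⊕ β) d ∧
    ∃ Z : α ⊕ β → MvPolynomial α ℂ,
      ∀ u : α → ℂ,
        (∀ i, eval (fun i' => eval u (Z i')) (G i) = Sum.elim u (fun _ => 0) i) ∧
        (∀ z : α ⊕ β → ℂ,
          (∀ i, eval z (G i) = Sum.elim u (fun _ => 0) i) →
          z = fun i' => eval u (Z i'))}

/-- `𝒥^lin_{m,d;n'}` (with `ℂ^m = ℂ^α × ℂ^β`, first block `α`): systems
`G ∈ 𝒫_{m,d}` such that for every `z1 ∈ ℂ^α` the system `R(·; z1)` is invertible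
with polynomial inverse `S`, and `det J_G(z1, R⁻¹(0; z1)) = c` for a nonzero
constant `c` independent of `z1`. -/
def JlinParamSet (α β : Type*) [Fintype α] [DecidableEq α]
    [Fintype β] [DecidableEq β] (d : ℕ) :
    Set ((α ⊕ β) → MvPolynomial (α ⊕ β) ℂ) :=
  {G | G ∈ PolySys (α ⊕ β) d ∧
    ∃ c : ℂ, c ≠ 0 ∧
      ∀ z1 : α → ℂ,
        ∃ S : β → MvPolynomial β ℂ,
          (∀ j, bind₁ (Rsys G z1) (S j) = X j) ∧
          (∀ j, bind₁ S (Rsys G z1 j) = X j) ∧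
          eval (Sum.elim z1 fun j => eval (fun _ : β => (0 : ℂ)) (S j))
            (jacDet G) = c}

namespace IFR
open MvPolynomial

lemma eval_aeval' {σ τ : Type*} (z : τ → ℂ) (g : σ → MvPolynomial τ ℂ)
    (p : MvPolynomial σ ℂ) :
    eval z (aeval g p) = eval (fun v => eval z (g v)) p := by
  rw [show (aeval g : MvPolynomial σ ℂ →ₐ[ℂ] MvPolynomial τ ℂ) p = bind₁ g p from rfl]
  simp only [eval, eval₂Hom_bind₁]

lemma eval_bind₁' {σ τ : Type*} (z : τ → ℂ) (g : σ → MvPolynomial τ ℂ)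
    (p : MvPolynomial σ ℂ) :
    eval z (bind₁ g p) = eval (fun v => eval z (g v)) p :=
  eval_aeval' z g p

lemma pderiv_aeval' {σ τ : Type*} [Fintype σ] [DecidableEq σ] [DecidableEq τ]
    (g : σ → MvPolynomial τ ℂ) (k : τ) (p : MvPolynomial σ ℂ) :
    pderiv k (aeval g p) = ∑ v : σ, aeval g (pderiv v p) * pderiv k (g v) := by
  induction p using MvPolynomial.induction_on with
  | C a => simp
  | add p q hp hq => simp only [map_add, hp, hq, Finset.sum_add_distrib, add_mul]
  | mul_X p v hp =>
      rw [map_mul, aeval_X, pderiv_mul, hp]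
      have : ∀ w : σ, aeval g (pderiv w (p * X v)) * pderiv k (g w)
          = (aeval g (pderiv w p) * pderiv k (g w)) * g v
            + (if v = w then aeval g p * pderiv k (g w) else 0) := by
        intro w
        rw [pderiv_mul, pderiv_X, map_add, map_mul, map_mul, aeval_X]
        rw [Pi.single_apply]
        split_ifs <;> simp only [mul_zero, zero_mul, add_zero, zero_add, mul_one,
          map_zero, map_one] <;> ring
      rw [Finset.sum_congr rfl (fun w _ => this w), Finset.sum_add_distrib,
        Finset.sum_ite_eq, if_pos (Finset.mem_univ v), ← Finset.sum_mul]

variable {n : ℕ}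

def dg {n : ℕ} (a : Fin n →₀ ℕ) : ℕ := a.sum fun _ e => e

lemma exists_pair {a : Fin n →₀ ℕ} (h : 2 ≤ dg a) :
    ∃ p : Fin n × Fin n, Finsupp.single p.1 1 + Finsupp.single p.2 1 ≤ a := by
  classical
  have ha : a ≠ 0 := by
    rintro rfl; simp [dg] at h
  obtain ⟨i, hi⟩ := Finsupp.ne_iff.mp ha
  simp only [Finsupp.coe_zero, Pi.zero_apply] at hi
  have hi1 : 1 ≤ a i := Nat.one_le_iff_ne_zero.mpr hi
  by_cases h2 : 2 ≤ a i
  · refine ⟨(i, i), ?_⟩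
    rw [Finsupp.le_def]
    intro j
    simp only [Finsupp.coe_add, Pi.add_apply, Finsupp.single_apply]
    rcases eq_or_ne i j with rfl | hne
    · simpa using h2
    · simp [hne]
  · have hai : a i = 1 := le_antisymm (by omega) hi1
    have : ∃ j, j ≠ i ∧ 1 ≤ a j := by
      by_contra hc
      push_neg at hc
      have hsub : a.support ⊆ {i} := by
        intro j hj
        simp only [Finset.mem_singleton]
        by_contra hji
        have := hc j hji
        have := Finsupp.mem_support_iff.mp hj
        omega
      have : dg a ≤ a i := by
        unfold dg
        rw [Finsupp.sum]
        calc ∑ v ∈ a.support, a v ≤ ∑ v ∈ {i}, a v :=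
              Finset.sum_le_sum_of_subset_of_nonneg hsub (by intros; positivity)
          _ = a i := Finset.sum_singleton _ _
      omega
    obtain ⟨j, hji, hj1⟩ := this
    refine ⟨(i, j), ?_⟩
    rw [Finsupp.le_def]
    intro k
    simp only [Finsupp.coe_add, Pi.add_apply, Finsupp.single_apply]
    by_cases h1 : k = i
    · subst h1
      have : j ≠ k := hji
      simpa [this] using hi1
    · by_cases h2' : j = k
      · subst h2'
        have hij : i ≠ j := fun h => h1 h.symm
        simpa [hij] using hj1
      · have hik : ¬ i = k := fun h => h1 h.symm
        simp [hik, h2']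

lemma dg_add (a b : Fin n →₀ ℕ) : dg (a + b) = dg a + dg b := by
  unfold dg
  rw [Finsupp.sum_add_index] <;> simp

lemma dg_single (i : Fin n) (k : ℕ) : dg (Finsupp.single i k) = k := by
  unfold dg; simp

/-- substitution map sending `y_{ij} ↦ z_i z_j` -/
noncomputable def sbst {n : ℕ} :
    MvPolynomial (Fin n ⊕ Fin n × Fin n) ℂ →ₐ[ℂ] MvPolynomial (Fin n) ℂ :=
  aeval (Sum.elim X fun q => X q.1 * X q.2)

noncomputable def redMon (a : Fin n →₀ ℕ) : MvPolynomial (Fin n ⊕ Fin n × Fin n) ℂ :=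
  if h : 2 ≤ dg a then
    X (Sum.inr (exists_pair h).choose) *
      rename Sum.inl (monomial (a - (Finsupp.single (exists_pair h).choose.1 1
        + Finsupp.single (exists_pair h).choose.2 1)) 1)
  else rename Sum.inl (monomial a 1)

lemma sbst_rename_inl (p : MvPolynomial (Fin n) ℂ) : sbst (rename Sum.inl p) = p := by
  rw [sbst, aeval_rename]
  simp only [Function.comp_def, Sum.elim_inl]
  exact aeval_X_left_apply p

lemma sbst_redMon (a : Fin n →₀ ℕ) : sbst (redMon a) = monomial a 1 := by
  rw [redMon]
  split_ifs with h
  · set p := (exists_pair h).choose with hp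
    have hle : Finsupp.single p.1 1 + Finsupp.single p.2 1 ≤ a := (exists_pair h).choose_spec
    rw [map_mul, sbst_rename_inl]
    rw [show sbst (X (Sum.inr p)) = X p.1 * X p.2 from aeval_X _ _]
    rw [X, X, monomial_mul, monomial_mul, one_mul, one_mul]
    congr 1
    rw [add_tsub_cancel_of_le hle]
  · exact sbst_rename_inl _

lemma redMon_deg (a : Fin n →₀ ℕ) : (redMon a).totalDegree ≤ max 1 (dg a - 1) := by
  rw [redMon]
  split_ifs with h
  · set p := (exists_pair h).choose with hp
    have hle : Finsupp.single p.1 1 + Finsupp.single p.2 1 ≤ a := (exists_pair h).choose_spec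
    set s := Finsupp.single p.1 1 + Finsupp.single p.2 1 with hs
    have hdg : dg (a - s) + 2 = dg a := by
      have hts : (a - s) + s = a := tsub_add_cancel_of_le hle
      have h2 : dg s = 2 := by rw [hs, dg_add, dg_single, dg_single]
      calc dg (a - s) + 2 = dg (a - s) + dg s := by rw [h2]
        _ = dg ((a - s) + s) := (dg_add _ _).symm
        _ = dg a := by rw [hts]
    refine le_trans (totalDegree_mul _ _) (le_trans ?_ (le_max_of_le_right
      (show 1 + dg (a - s) ≤ dg a - 1 by omega)))
    exact add_le_add (le_of_eq (totalDegree_X _))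
      (le_trans (totalDegree_rename_le _ _) (totalDegree_monomial_le _ _))
  · refine le_max_of_le_left ?_
    have h1 : dg a ≤ 1 := by omega
    exact le_trans (le_trans (totalDegree_rename_le _ _) (totalDegree_monomial_le _ _)) h1

noncomputable def reduceP (p : MvPolynomial (Fin n) ℂ) :
    MvPolynomial (Fin n ⊕ Fin n × Fin n) ℂ :=
  (AddMonoidAlgebra.coeff p).sum fun a c => C c * redMon a

lemma sbst_reduceP (p : MvPolynomial (Fin n) ℂ) : sbst (reduceP p) = p := by
  rw [reduceP, map_finsuppSum]
  conv_rhs => rw [← support_sum_monomial_coeff p]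
  rw [sum_def]
  refine Finset.sum_congr rfl fun a ha => ?_
  rw [map_mul, sbst_redMon, algHom_C, algebraMap_eq, C_mul_monomial, mul_one]

lemma reduceP_deg (p : MvPolynomial (Fin n) ℂ) :
    (reduceP p).totalDegree ≤ max 1 (p.totalDegree - 1) := by
  rw [reduceP, sum_def]
  refine le_trans (totalDegree_finset_sum _ _) (Finset.sup_le fun a ha => ?_)
  calc (C (coeff a p) * redMon a).totalDegree
      ≤ (C (coeff a p) : MvPolynomial (Fin n ⊕ Fin n × Fin n) ℂ).totalDegree
        + (redMon a).totalDegree := totalDegree_mul _ _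
    _ ≤ 0 + max 1 (dg a - 1) :=
        add_le_add (le_of_eq (totalDegree_C _)) (redMon_deg a)
    _ ≤ max 1 (p.totalDegree - 1) := by
        have : dg a ≤ p.totalDegree := le_totalDegree ha
        simp only [zero_add]
        omega

/-- the point (z, z⊗z) -/
def Epl (z : Fin n → ℂ) : Fin n ⊕ Fin n × Fin n → ℂ := Sum.elim z fun q => z q.1 * z q.2

noncomputable def Phi {n : ℕ} (F : Fin n → MvPolynomial (Fin n) ℂ) :
    Fin n ⊕ Fin n × Fin n → MvPolynomial (Fin n ⊕ Fin n × Fin n) ℂ :=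
  Sum.elim (fun i => reduceP (F i))
    (fun q => X (Sum.inr q) - X (Sum.inl q.1) * X (Sum.inl q.2))

lemma eval_sbst (z : Fin n → ℂ) (r : MvPolynomial (Fin n ⊕ Fin n × Fin n) ℂ) :
    eval z (sbst r) = eval (Epl z) r := by
  rw [sbst, eval_aeval']
  have hE : (fun v => eval z (Sum.elim X (fun q => X q.1 * X q.2) v)) = Epl z := by
    funext v
    cases v with
    | inl j => simp [Epl]
    | inr q => simp [Epl]
  rw [hE]

lemma eval_reduceP (z : Fin n → ℂ) (p : MvPolynomial (Fin n) ℂ) :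
    eval (Epl z) (reduceP p) = eval z p := by
  rw [← eval_sbst, sbst_reduceP]

lemma Epl_of_prod {w : Fin n ⊕ Fin n × Fin n → ℂ}
    (h : ∀ q, w (Sum.inr q) = w (Sum.inl q.1) * w (Sum.inl q.2)) :
    w = Epl (fun i => w (Sum.inl i)) := by
  funext v
  cases v with
  | inl j => rfl
  | inr q => exact h q

lemma eval_Phi_inr (F : Fin n → MvPolynomial (Fin n) ℂ)
    (w : Fin n ⊕ Fin n × Fin n → ℂ) (q : Fin n × Fin n) :
    eval w (Phi F (Sum.inr q)) = w (Sum.inr q) - w (Sum.inl q.1) * w (Sum.inl q.2) := by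
  simp [Phi]

lemma jac_eval (F : Fin n → MvPolynomial (Fin n) ℂ) (z : Fin n → ℂ) :
    eval (Epl z) (jacDet (Phi F)) = eval z (jacDet F) := by
  classical
  rw [jacDet, jacDet, RingHom.map_det, RingHom.map_det, RingHom.mapMatrix_apply,
    RingHom.mapMatrix_apply]
  set A : Matrix (Fin n) (Fin n) ℂ :=
    Matrix.of fun k i => eval (Epl z) (pderiv (Sum.inl k) (reduceP (F i))) with hA
  set B : Matrix (Fin n) (Fin n × Fin n) ℂ :=
    Matrix.of fun k q => eval (Epl z) (pderiv (Sum.inl k) (Phi F (Sum.inr q))) with hB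
  set Cm : Matrix (Fin n × Fin n) (Fin n) ℂ :=
    Matrix.of fun p i => eval (Epl z) (pderiv (Sum.inr p) (reduceP (F i))) with hC
  have hblock : ((Matrix.of fun i j => pderiv i (Phi F j)).map (eval (Epl z)))
      = Matrix.fromBlocks A B Cm 1 := by
    ext v w
    cases v with
    | inl k =>
        cases w with
        | inl i => simp [Phi, hA, Matrix.map_apply]
        | inr q => simp [hB, Matrix.map_apply]
    | inr p =>
        cases w with
        | inl i => simp [Phi, hC, Matrix.map_apply]
        | inr q =>
            simp only [Matrix.map_apply, Matrix.of_apply, Phi, Sum.elim_inr,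
              Matrix.fromBlocks_apply₂₂]
            rw [map_sub, map_sub]
            rw [pderiv_X]
            by_cases hpq : p = q
            · subst hpq
              simp [Pi.single_apply, Matrix.one_apply]
            · have hne : (Sum.inr q : Fin n ⊕ Fin n × Fin n) ≠ Sum.inr p := by
                simpa using Ne.symm hpq
              simp [Pi.single_apply, Matrix.one_apply, hpq, hne]
  rw [hblock, Matrix.det_fromBlocks_one₂₂]
  congr 1
  ext k i
  simp only [Matrix.map_apply, Matrix.of_apply]
  set g : (Fin n ⊕ Fin n × Fin n) → MvPolynomial (Fin n) ℂ :=
    Sum.elim X fun q => X q.1 * X q.2 with hg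
  have hFi : F i = aeval g (reduceP (F i)) := (sbst_reduceP (F i)).symm
  set r := reduceP (F i) with hr
  rw [hFi, pderiv_aeval', map_sum, Fintype.sum_sum_type]
  have h1 : (∑ j : Fin n, eval z (aeval g (pderiv (Sum.inl j) r) * pderiv k (g (Sum.inl j))))
      = A k i := by
    have : ∀ j : Fin n, eval z (aeval g (pderiv (Sum.inl j) r) * pderiv k (g (Sum.inl j)))
        = if j = k then A j i else 0 := by
      intro j
      rw [map_mul]
      have : eval z (aeval g (pderiv (Sum.inl j) r)) = A j i := by
        rw [hA]; exact eval_sbst z _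
      rw [this, hg]
      simp only [Sum.elim_inl, pderiv_X, Pi.single_apply]
      split_ifs <;> simp
    rw [Finset.sum_congr rfl fun j _ => this j, Finset.sum_ite_eq',
      if_pos (Finset.mem_univ k)]
  have h2 : (∑ q : Fin n × Fin n,
        eval z (aeval g (pderiv (Sum.inr q) r) * pderiv k (g (Sum.inr q))))
      = -(B * Cm) k i := by
    rw [Matrix.mul_apply, ← Finset.sum_neg_distrib]
    refine Finset.sum_congr rfl fun q _ => ?_
    rw [map_mul]
    have hc : eval z (aeval g (pderiv (Sum.inr q) r)) = Cm q i := by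
      rw [hC]; exact eval_sbst z _
    rw [hc, hg]
    have hBkq : B k q = -(eval z (pderiv k (X q.1 * X q.2 : MvPolynomial (Fin n) ℂ))) := by
      rw [hB]
      simp only [Phi, Sum.elim_inr, Matrix.of_apply, map_sub]
      have hz : eval (Epl z) (pderiv (Sum.inl k) (X (Sum.inr q) :
          MvPolynomial (Fin n ⊕ Fin n × Fin n) ℂ)) = 0 := by
        rw [pderiv_X_of_ne (by simp)]
        simp
      rw [hz, zero_sub]
      congr 1
      rw [pderiv_mul, pderiv_mul, map_add, map_add, map_mul, map_mul, map_mul, map_mul]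
      have e1 : eval (Epl z) (pderiv (Sum.inl k) (X (Sum.inl q.1) :
          MvPolynomial (Fin n ⊕ Fin n × Fin n) ℂ)) = eval z (pderiv k (X q.1 :
          MvPolynomial (Fin n) ℂ)) := by
        simp [pderiv_X, Pi.single_apply]
      have e2 : eval (Epl z) (pderiv (Sum.inl k) (X (Sum.inl q.2) :
          MvPolynomial (Fin n ⊕ Fin n × Fin n) ℂ)) = eval z (pderiv k (X q.2 :
          MvPolynomial (Fin n) ℂ)) := by
        simp [pderiv_X, Pi.single_apply]
      rw [e1, e2]
      simp [Epl]
    rw [Sum.elim_inr, hBkq]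
    ring
  rw [h1, h2]
  simp only [Matrix.sub_apply]
  ring

lemma Phi_deg {n d : ℕ} (hd : 3 ≤ d) (F : Fin n → MvPolynomial (Fin n) ℂ)
    (hF : F ∈ PolySys (Fin n) d) :
    Phi F ∈ PolySys (Fin n ⊕ Fin n × Fin n) (d - 1) := by
  intro v
  cases v with
  | inl i =>
      refine le_trans (reduceP_deg (F i)) ?_
      have := hF i
      simp only [max_le_iff]
      omega
  | inr q =>
      show (X (Sum.inr q) - X (Sum.inl q.1) * X (Sum.inl q.2) :
        MvPolynomial (Fin n ⊕ Fin n × Fin n) ℂ).totalDegree ≤ d - 1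
      refine le_trans (totalDegree_sub _ _) ?_
      have h1 : (X (Sum.inr q) : MvPolynomial (Fin n ⊕ Fin n × Fin n) ℂ).totalDegree ≤ 1 :=
        le_of_eq (totalDegree_X _)
      have h2 : (X (Sum.inl q.1) * X (Sum.inl q.2) :
          MvPolynomial (Fin n ⊕ Fin n × Fin n) ℂ).totalDegree ≤ 2 := by
        refine le_trans (totalDegree_mul _ _) ?_
        have := totalDegree_X (R := ℂ) (Sum.inl q.1 : Fin n ⊕ Fin n × Fin n)
        have := totalDegree_X (R := ℂ) (Sum.inl q.2 : Fin n ⊕ Fin n × Fin n)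
        omega
      simp only [max_le_iff]
      omega

lemma Rsys_Phi (F : Fin n → MvPolynomial (Fin n) ℂ) (z1 : Fin n → ℂ) (j : Fin n × Fin n) :
    Rsys (Phi F) z1 j = X j - C (z1 j.1 * z1 j.2) := by
  rw [Rsys]
  simp only [Phi, Sum.elim_inr, map_sub, map_mul, aeval_X, Sum.elim_inl, Sum.elim_inr]
  try rw [← C_mul]

end IFR

/-- **Reduction theorem (Theorem 4 of the paper)**: for every `n` and `d ≥ 3`
there is an injective map `Φ : 𝒫_{n,d} → 𝒫_{n(n+1),d−1}` (the target space
`ℂ^{n(n+1)} = ℂ^{n+n²}` being indexed by `Fin n ⊕ Fin n × Fin n`, with first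
block `Fin n`) such that `Φ(𝒥^lin_{n,d}) = 𝒥^lin_{n(n+1),d−1;n} ∩ Φ(𝒫_{n,d})`
and `Φ(𝒥_{n,d}) = 𝒥_{n(n+1),d−1;n} ∩ Φ(𝒫_{n,d})`. -/
theorem intermediate_field_reduction (n d : ℕ) (hd : 3 ≤ d) :
    ∃ Φ : (Fin n → MvPolynomial (Fin n) ℂ) →
        ((Fin n ⊕ Fin n × Fin n) → MvPolynomial (Fin n ⊕ Fin n × Fin n) ℂ),
      Set.InjOn Φ (PolySys (Fin n) d) ∧
      Set.MapsTo Φ (PolySys (Fin n) d) (PolySys (Fin n ⊕ Fin n × Fin n) (d - 1)) ∧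
      Φ '' JlinSet (Fin n) d =
        JlinParamSet (Fin n) (Fin n × Fin n) (d - 1) ∩ Φ '' PolySys (Fin n) d ∧
      Φ '' JSet (Fin n) d =
        JParamSet (Fin n) (Fin n × Fin n) (d - 1) ∩ Φ '' PolySys (Fin n) d := by
  classical
  refine ⟨IFR.Phi, ?_, ?_, ?_, ?_⟩
  · -- injectivity
    intro F _ F' _ h
    funext i
    have h1 : IFR.reduceP (F i) = IFR.reduceP (F' i) := congrFun h (Sum.inl i)
    have h2 := congrArg (IFR.sbst (n := n)) h1
    rwa [IFR.sbst_reduceP, IFR.sbst_reduceP] at h2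
  · -- degree bound
    exact fun F hF => IFR.Phi_deg hd F hF
  · -- Jlin image
    ext G
    constructor
    · rintro ⟨F, ⟨hFP, c, hc, hjac⟩, rfl⟩
      refine ⟨⟨IFR.Phi_deg hd F hFP, c, hc, fun z1 => ?_⟩, F, hFP, rfl⟩
      refine ⟨fun j => X j + C (z1 j.1 * z1 j.2), ?_, ?_, ?_⟩
      · intro j
        rw [map_add, bind₁_X_right, bind₁_C_right, IFR.Rsys_Phi]
        ring
      · intro j
        rw [IFR.Rsys_Phi, map_sub, bind₁_X_right, bind₁_C_right]
        ring
      · have hpt : (Sum.elim z1 fun j : Fin n × Fin n =>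
            eval (fun _ : Fin n × Fin n => (0:ℂ)) (X j + C (z1 j.1 * z1 j.2)))
            = IFR.Epl z1 := by
          funext v
          cases v with
          | inl i => rfl
          | inr q => simp [IFR.Epl]
        rw [hpt, IFR.jac_eval, hjac, eval_C]
    · rintro ⟨⟨hGP, c, hc, hS⟩, F, hFP, rfl⟩
      refine ⟨F, ⟨hFP, c, hc, ?_⟩, rfl⟩
      apply MvPolynomial.funext
      intro z
      obtain ⟨S, h1, h2, h3⟩ := hS z
      have hev0 : ∀ j : Fin n × Fin n, eval (fun _ : Fin n × Fin n => (0:ℂ)) (S j)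
          = z j.1 * z j.2 := by
        intro j
        have hj := congrArg (eval fun q : Fin n × Fin n => z q.1 * z q.2) (h1 j)
        rw [IFR.eval_bind₁', eval_X] at hj
        have hw : (fun q : Fin n × Fin n =>
            eval (fun q' : Fin n × Fin n => z q'.1 * z q'.2) (Rsys (IFR.Phi F) z q))
            = fun _ : Fin n × Fin n => (0:ℂ) := by
          funext q
          rw [IFR.Rsys_Phi]
          simp
        rwa [hw] at hj
      have hpt : (Sum.elim z fun j : Fin n × Fin n =>
          eval (fun _ : Fin n × Fin n => (0:ℂ)) (S j)) = IFR.Epl z := by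
        funext v
        cases v with
        | inl i => rfl
        | inr q => simpa [IFR.Epl] using hev0 q
      rw [hpt, IFR.jac_eval] at h3
      rw [h3, eval_C]
  · -- J image
    ext G
    constructor
    · rintro ⟨F, ⟨hFP, Gi, hg1, hg2⟩, rfl⟩
      refine ⟨⟨IFR.Phi_deg hd F hFP,
        Sum.elim Gi (fun q => Gi q.1 * Gi q.2), fun u => ?_⟩, F, hFP, rfl⟩
      set w : Fin n → ℂ := fun i => eval u (Gi i) with hwdef
      have hpz : (fun i' => eval u (Sum.elim Gi (fun q => Gi q.1 * Gi q.2) i'))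
          = IFR.Epl w := by
        funext v
        cases v with
        | inl i => rfl
        | inr q => simp [IFR.Epl, hwdef]
      constructor
      · intro i
        rw [hpz]
        cases i with
        | inl i0 =>
            rw [show IFR.Phi F (Sum.inl i0) = IFR.reduceP (F i0) from rfl,
              IFR.eval_reduceP, Sum.elim_inl]
            have he : eval w (F i0) = eval u (bind₁ Gi (F i0)) := by
              rw [IFR.eval_bind₁']
            rw [he, hg2, eval_X]
        | inr q =>
            rw [IFR.eval_Phi_inr, Sum.elim_inr]
            simp [IFR.Epl]
      · intro zz hzz
        have hprod : ∀ q : Fin n × Fin n,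
            zz (Sum.inr q) = zz (Sum.inl q.1) * zz (Sum.inl q.2) := by
          intro q
          have h0 := hzz (Sum.inr q)
          rw [IFR.eval_Phi_inr, Sum.elim_inr] at h0
          exact sub_eq_zero.mp h0
        have hz2 : zz = IFR.Epl (fun i => zz (Sum.inl i)) := IFR.Epl_of_prod hprod
        set y : Fin n → ℂ := fun i => zz (Sum.inl i) with hy
        have hFy : ∀ i0, eval y (F i0) = u i0 := by
          intro i0
          have h0 := hzz (Sum.inl i0)
          rw [hz2, show IFR.Phi F (Sum.inl i0) = IFR.reduceP (F i0) from rfl,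
            IFR.eval_reduceP, Sum.elim_inl] at h0
          exact h0
        have hyw : y = w := by
          funext i
          have h0 : eval y (bind₁ F (Gi i)) = y i := by rw [hg1, eval_X]
          rw [IFR.eval_bind₁'] at h0
          have hu : (fun j => eval y (F j)) = u := funext hFy
          rw [hu] at h0
          exact h0.symm
        rw [hz2, hyw]
        exact hpz.symm
    · rintro ⟨⟨hGP, Z, hZ⟩, F, hFP, rfl⟩
      refine ⟨F, ⟨hFP, fun i => Z (Sum.inl i), ?_, ?_⟩, rfl⟩
      · intro i
        apply MvPolynomial.funext
        intro y
        rw [IFR.eval_bind₁', eval_X]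
        set u : Fin n → ℂ := fun j => eval y (F j) with hu
        obtain ⟨heq, huniq⟩ := hZ u
        have hEy : IFR.Epl y = fun i' => eval u (Z i') := by
          apply huniq
          intro i'
          cases i' with
          | inl i0 =>
              rw [show IFR.Phi F (Sum.inl i0) = IFR.reduceP (F i0) from rfl,
                IFR.eval_reduceP, Sum.elim_inl]
          | inr q =>
              rw [IFR.eval_Phi_inr, Sum.elim_inr]
              simp [IFR.Epl]
        exact (congrFun hEy (Sum.inl i)).symm
      · intro i
        apply MvPolynomial.funext
        intro uu
        rw [IFR.eval_bind₁', eval_X]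
        obtain ⟨heq, huniq⟩ := hZ uu
        set w : Fin n → ℂ := fun j => eval uu (Z (Sum.inl j)) with hw
        have hpz : (fun i' => eval uu (Z i')) = IFR.Epl w := by
          apply IFR.Epl_of_prod
          intro q
          have h0 := heq (Sum.inr q)
          rw [IFR.eval_Phi_inr, Sum.elim_inr] at h0
          exact sub_eq_zero.mp h0
        have h0 := heq (Sum.inl i)
        rw [hpz, show IFR.Phi F (Sum.inl i) = IFR.reduceP (F i) from rfl,
          IFR.eval_reduceP, Sum.elim_inl] at h0
        exact h0
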